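/- Let G be an abelian group acting on a set X, and H a complex Hilbert space. Let S₀, S₁, S₂ ⊆ X be G-invariant subsets, let u_λ : G × S_λ → U(H) (λ ∈ {0,1,2}) satisfy u_λ(g₁g₀, x) = u_λ(g₁, x)·u_λ(g₀, g₁⁻¹·x) for all g₀, g₁ ∈ G and x ∈ S_λ, and let v₀₁ : S₀∩S₁ → U(H), v₁₂ : S₁∩S₂ → U(H), v₀₂ : S₀∩S₂ → U(H). Assume that for each pair (λ,μ) ∈ {(0,1),(1,2),(0,2)}, each g ∈ G and each x ∈ S_λ∩S_μ the operator η_{λμ}(g,x) := u_μ(g,x)·v_{λμ}(g⁻¹·x)·u_λ(g,x)*·v_{λμ}(x)* is a scalar unitary (a modulus-1 multiple of the identity), and that for each x ∈ S₀∩S₁∩S₂ the operator ν(x) := v₁₂(x)·v₀₁(x)·v₀₂(x)* is a scalar unitary. Then: (a) for all g₁ ∈ G and x ∈ S₀∩S₁∩S₂: η₀₁(g₁,x)·η₁₂(g₁,x)·η₀₂(g₁,x)⁻¹ = ν(x)⁻¹·ν(g₁⁻¹·x); and (b) for all g₀, g₁ ∈ G and x ∈ S₀∩S₁: η₀₁(g₁,x)·η₀₁(g₀g₁,x)⁻¹·η₀₁(g₀,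 g₁⁻¹·x) = 1. -/

import Mathlib

/-- The operator `η_{λμ}(g,x) = u_μ(g,x) · v_{λμ}(g⁻¹x) · u_λ(g,x)* · v_{λμ}(x)*`. -/
noncomputable def etaOp {G X H : Type*} [Group G] [MulAction G X]
    [NormedAddCommGroup H] [InnerProductSpace ℂ H] [CompleteSpace H]
    (ua ub : G → X → (H →L[ℂ] H)) (v : X → (H →L[ℂ] H)) (g : G) (x : X) : H →L[ℂ] H :=
  ub g x * v (g⁻¹ • x) * star (ua g x) * star (v x)

/-- The operator `ν(x) = v₁₂(x) · v₀₁(x) · v₀₂(x)*`. -/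
noncomputable def nuOp {X H : Type*}
    [NormedAddCommGroup H] [InnerProductSpace ℂ H] [CompleteSpace H]
    (v01 v12 v02 : X → (H →L[ℂ] H)) (x : X) : H →L[ℂ] H :=
  v12 x * v01 x * star (v02 x)

lemma scalar_cancel' {H : Type*} [NormedAddCommGroup H] [InnerProductSpace ℂ H]
    [Nontrivial H] {c d : ℂ} (h : c • (1 : H →L[ℂ] H) = d • 1) : c = d := by
  obtain ⟨v, hv⟩ := exists_ne (0 : H)
  have h2 := congrArg (fun T : H →L[ℂ] H => T v) h
  simp only [ContinuousLinearMap.smul_apply, ContinuousLinearMap.one_apply] at h2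
  exact smul_left_injective ℂ hv h2

lemma eta_key' {G X H : Type*} [Group G] [MulAction G X] [NormedAddCommGroup H]
    [InnerProductSpace ℂ H] [CompleteSpace H]
    {ua ub : G → X → (H →L[ℂ] H)} {v : X → (H →L[ℂ] H)} {g : G} {x : X} {c : ℂ}
    (hv : v x ∈ unitary (H →L[ℂ] H)) (h : etaOp ua ub v g x = c • 1) :
    ub g x * v (g⁻¹ • x) * star (ua g x) = c • v x := by
  have h1 : star (v x) * v x = 1 := (Unitary.mem_iff.mp hv).1
  have h2 := congrArg (· * v x) h
  simpa [etaOp, mul_assoc, h1, smul_mul_assoc] using h2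

lemma norm_one_star_mul {c : ℂ} (hc : ‖c‖ = 1) : star c * c = 1 := by
  have : star c * c = (‖c‖ : ℂ) ^ 2 := by
    rw [Complex.star_def, ← Complex.normSq_eq_conj_mul_self]
    simp [Complex.normSq_eq_norm_sq]
  rw [this, hc]; norm_num

/-- The pair `(ν, η)` built from local implementing unitaries of an
equivariant system is a cocycle for the Raeburn–Williams equivariant complex:
(a) `η₀₁·η₁₂·η₀₂⁻¹ = ν⁻¹·(ν ∘ g₁⁻¹)` on `S₀ ∩ S₁ ∩ S₂`, and
(b) `η₀₁(g₁,x)·η₀₁(g₀g₁,x)⁻¹·η₀₁(g₀,g₁⁻¹x) = 1` on `S₀ ∩ S₁`. -/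
theorem rw_equivariant_cocycle {G X H : Type*} [CommGroup G] [MulAction G X]
    [NormedAddCommGroup H] [InnerProductSpace ℂ H] [CompleteSpace H]
    (S0 S1 S2 : Set X)
    (hS0 : ∀ (g : G) (x : X), x ∈ S0 → g • x ∈ S0)
    (hS1 : ∀ (g : G) (x : X), x ∈ S1 → g • x ∈ S1)
    (hS2 : ∀ (g : G) (x : X), x ∈ S2 → g • x ∈ S2)
    (u0 u1 u2 : G → X → (H →L[ℂ] H))
    (hu0 : ∀ (g : G) (x : X), x ∈ S0 → u0 g x ∈ unitary (H →L[ℂ] H))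
    (hu1 : ∀ (g : G) (x : X), x ∈ S1 → u1 g x ∈ unitary (H →L[ℂ] H))
    (hu2 : ∀ (g : G) (x : X), x ∈ S2 → u2 g x ∈ unitary (H →L[ℂ] H))
    (hcoc0 : ∀ (g0 g1 : G) (x : X), x ∈ S0 → u0 (g1 * g0) x = u0 g1 x * u0 g0 (g1⁻¹ • x))
    (hcoc1 : ∀ (g0 g1 : G) (x : X), x ∈ S1 → u1 (g1 * g0) x = u1 g1 x * u1 g0 (g1⁻¹ • x))
    (hcoc2 : ∀ (g0 g1 : G) (x : X), x ∈ S2 → u2 (g1 * g0) x = u2 g1 x * u2 g0 (g1⁻¹ • x))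
    (v01 v12 v02 : X → (H →L[ℂ] H))
    (hv01 : ∀ x ∈ S0 ∩ S1, v01 x ∈ unitary (H →L[ℂ] H))
    (hv12 : ∀ x ∈ S1 ∩ S2, v12 x ∈ unitary (H →L[ℂ] H))
    (hv02 : ∀ x ∈ S0 ∩ S2, v02 x ∈ unitary (H →L[ℂ] H))
    (hη01 : ∀ (g : G), ∀ x ∈ S0 ∩ S1,
      ∃ c : ℂ, ‖c‖ = 1 ∧ etaOp u0 u1 v01 g x = c • (1 : H →L[ℂ] H))
    (hη12 : ∀ (g : G), ∀ x ∈ S1 ∩ S2,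
      ∃ c : ℂ, ‖c‖ = 1 ∧ etaOp u1 u2 v12 g x = c • (1 : H →L[ℂ] H))
    (hη02 : ∀ (g : G), ∀ x ∈ S0 ∩ S2,
      ∃ c : ℂ, ‖c‖ = 1 ∧ etaOp u0 u2 v02 g x = c • (1 : H →L[ℂ] H))
    (hν : ∀ x ∈ S0 ∩ S1 ∩ S2,
      ∃ c : ℂ, ‖c‖ = 1 ∧ nuOp v01 v12 v02 x = c • (1 : H →L[ℂ] H)) :
    (∀ (g1 : G), ∀ x ∈ S0 ∩ S1 ∩ S2,
      etaOp u0 u1 v01 g1 x * etaOp u1 u2 v12 g1 x * star (etaOp u0 u2 v02 g1 x) =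
        star (nuOp v01 v12 v02 x) * nuOp v01 v12 v02 (g1⁻¹ • x)) ∧
    (∀ (g0 g1 : G), ∀ x ∈ S0 ∩ S1,
      etaOp u0 u1 v01 g1 x * star (etaOp u0 u1 v01 (g0 * g1) x) *
        etaOp u0 u1 v01 g0 (g1⁻¹ • x) = 1) := by
  rcases subsingleton_or_nontrivial H with hH | hH
  · exact ⟨fun _ _ _ => Subsingleton.elim _ _, fun _ _ _ _ => Subsingleton.elim _ _⟩
  constructor
  · -- part (a)
    intro g1 x hx
    obtain ⟨⟨hx0, hx1⟩, hx2⟩ := hx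
    obtain ⟨a, han, hA⟩ := hη01 g1 x ⟨hx0, hx1⟩
    obtain ⟨b, hbn, hB⟩ := hη12 g1 x ⟨hx1, hx2⟩
    obtain ⟨c, hcn, hC⟩ := hη02 g1 x ⟨hx0, hx2⟩
    obtain ⟨n, hnn, hN⟩ := hν x ⟨⟨hx0, hx1⟩, hx2⟩
    obtain ⟨n', hn'n, hN'⟩ := hν (g1⁻¹ • x) ⟨⟨hS0 _ _ hx0, hS1 _ _ hx1⟩, hS2 _ _ hx2⟩
    have kA := eta_key' (hv01 x ⟨hx0, hx1⟩) hA
    have kB := eta_key' (hv12 x ⟨hx1, hx2⟩) hB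
    have kC := eta_key' (hv02 x ⟨hx0, hx2⟩) hC
    have kC' : u0 g1 x * (star (v02 (g1⁻¹ • x)) * star (u2 g1 x)) =
        star c • star (v02 x) := by
      have h2 := congrArg star kC
      simpa [star_mul, mul_assoc] using h2
    have hu0s : star (u0 g1 x) * u0 g1 x = 1 := (Unitary.mem_iff.mp (hu0 g1 x hx0)).1
    have hu1s : star (u1 g1 x) * u1 g1 x = 1 := (Unitary.mem_iff.mp (hu1 g1 x hx1)).1
    have hu2m : u2 g1 x * star (u2 g1 x) = 1 := (Unitary.mem_iff.mp (hu2 g1 x hx2)).2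
    have e0 : ∀ t : H →L[ℂ] H, star (u0 g1 x) * (u0 g1 x * t) = t := fun t => by
      rw [← mul_assoc, hu0s, one_mul]
    have e1 : ∀ t : H →L[ℂ] H, star (u1 g1 x) * (u1 g1 x * t) = t := fun t => by
      rw [← mul_assoc, hu1s, one_mul]
    have key : u2 g1 x * nuOp v01 v12 v02 (g1⁻¹ • x) * star (u2 g1 x) =
        (b * a * star c) • nuOp v01 v12 v02 x := by
      have step : u2 g1 x * nuOp v01 v12 v02 (g1⁻¹ • x) * star (u2 g1 x) =
          (u2 g1 x * v12 (g1⁻¹ • x) * star (u1 g1 x)) *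
            ((u1 g1 x * v01 (g1⁻¹ • x) * star (u0 g1 x)) *
              (u0 g1 x * (star (v02 (g1⁻¹ • x)) * star (u2 g1 x)))) := by
        simp only [nuOp, mul_assoc, e0, e1]
      rw [step, kA, kB, kC']
      simp only [nuOp, smul_mul_assoc, mul_smul_comm, smul_smul, mul_assoc]
      ring_nf
    have hop : n' • (1 : H →L[ℂ] H) = (b * a * star c * n) • 1 := by
      calc n' • (1 : H →L[ℂ] H)
          = u2 g1 x * (n' • (1 : H →L[ℂ] H)) * star (u2 g1 x) := by
            rw [mul_smul_comm, mul_one, smul_mul_assoc, hu2m]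
        _ = u2 g1 x * nuOp v01 v12 v02 (g1⁻¹ • x) * star (u2 g1 x) := by rw [hN']
        _ = (b * a * star c) • nuOp v01 v12 v02 x := key
        _ = (b * a * star c * n) • 1 := by rw [hN, smul_smul]
    have hn' : n' = b * a * star c * n := scalar_cancel' hop
    have hsc : a * b * star c = star n * n' := by
      rw [hn']
      have h1 := norm_one_star_mul hnn
      calc a * b * star c = (star n * n) * (a * b * star c) := by rw [h1, one_mul]
        _ = star n * (b * a * star c * n) := by ring
    rw [hA, hB, hC, hN, hN']
    simp only [star_smul, star_one, smul_mul_assoc, mul_smul_comm, smul_smul, mul_one, one_mul]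
    rw [show star c * (b * a) = a * b * star c by ring, hsc, mul_comm n' (star n)]
  · -- part (b)
    intro g0 g1 x hx
    obtain ⟨hx0, hx1⟩ := hx
    have hy0 : g1⁻¹ • x ∈ S0 := hS0 _ _ hx0
    have hy1 : g1⁻¹ • x ∈ S1 := hS1 _ _ hx1
    obtain ⟨a1, ha1n, hA1⟩ := hη01 g1 x ⟨hx0, hx1⟩
    obtain ⟨a10, ha10n, hA10⟩ := hη01 (g0 * g1) x ⟨hx0, hx1⟩
    obtain ⟨a0, ha0n, hA0⟩ := hη01 g0 (g1⁻¹ • x) ⟨hy0, hy1⟩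
    have k1 := eta_key' (hv01 x ⟨hx0, hx1⟩) hA1
    have k10 := eta_key' (hv01 x ⟨hx0, hx1⟩) hA10
    have k0 := eta_key' (hv01 (g1⁻¹ • x) ⟨hy0, hy1⟩) hA0
    have hgc : (g0 * g1)⁻¹ • x = g0⁻¹ • g1⁻¹ • x := by
      rw [← mul_smul, ← mul_inv_rev, mul_comm g1 g0]
    have hc0 : u0 (g0 * g1) x = u0 g1 x * u0 g0 (g1⁻¹ • x) := by
      rw [mul_comm g0 g1]; exact hcoc0 g0 g1 x hx0
    have hc1 : u1 (g0 * g1) x = u1 g1 x * u1 g0 (g1⁻¹ • x) := by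
      rw [mul_comm g0 g1]; exact hcoc1 g0 g1 x hx1
    have k10' : (a0 * a1) • v01 x = a10 • v01 x := by
      rw [hc0, hc1, hgc] at k10
      calc (a0 * a1) • v01 x
          = a0 • (u1 g1 x * v01 (g1⁻¹ • x) * star (u0 g1 x)) := by
            rw [k1, smul_smul]
        _ = u1 g1 x * (a0 • v01 (g1⁻¹ • x)) * star (u0 g1 x) := by
            simp only [smul_mul_assoc, mul_smul_comm]
        _ = u1 g1 x * (u1 g0 (g1⁻¹ • x) * v01 (g0⁻¹ • g1⁻¹ • x) *
              star (u0 g0 (g1⁻¹ • x))) * star (u0 g1 x) := by rw [k0]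
        _ = u1 g1 x * u1 g0 (g1⁻¹ • x) * v01 (g0⁻¹ • g1⁻¹ • x) *
              star (u0 g1 x * u0 g0 (g1⁻¹ • x)) := by
            rw [star_mul]; simp only [mul_assoc]
        _ = a10 • v01 x := k10
    have hvs : v01 x * star (v01 x) = 1 := (Unitary.mem_iff.mp (hv01 x ⟨hx0, hx1⟩)).2
    have hsc1 : (a0 * a1) • (1 : H →L[ℂ] H) = a10 • 1 := by
      have := congrArg (· * star (v01 x)) k10'
      simpa [smul_mul_assoc, mul_assoc, hvs] using this
    have heq : a0 * a1 = a10 := scalar_cancel' hsc1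
    rw [hA1, hA10, hA0]
    simp only [star_smul, star_one, smul_mul_assoc, mul_smul_comm, smul_smul, mul_one, one_mul]
    rw [← heq]
    have h1 := norm_one_star_mul ha1n
    have h0 := norm_one_star_mul ha0n
    calc (a0 * (star (a0 * a1) * a1)) • (1 : H →L[ℂ] H)
        = ((star a0 * a0) * (star a1 * a1)) • 1 := by rw [star_mul]; ring_nf
      _ = 1 := by rw [h1, h0, one_mul, one_smul]
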